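/- Let F: A^N → A^M be given by polynomials with coefficients in a local ring (A, m), let λ ∈ A^N be a zero of F, and suppose the Jacobian matrix of F at λ has an N×N minor that is a unit in A. If α ∈ A^N satisfies α ≡ λ mod m^κ, then the linearized system F(α) + JF(α)·ε = 0 has a unique solution ε ∈ (m^κ)^N modulo m^{2κ}, and α + ε ≡ λ mod m^{2κ}. -/
import Mathlib

open MvPolynomial

lemma taylor_mem {A : Type*} [CommRing A] {N : ℕ} (I : Ideal A)
    (x h : Fin N → A) (hh : ∀ j, h j ∈ I) (P : MvPolynomial (Fin N) A) :
    eval (fun j => x j + h j) P - eval x P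
      - ∑ j, eval x (pderiv j P) * h j ∈ I ^ 2 := by
  induction P using MvPolynomial.induction_on with
  | C a => simp
  | add p q hp hq =>
      have := Ideal.add_mem _ hp hq
      convert this using 1
      simp only [map_add, Finset.sum_add_distrib, add_mul]
      ring
  | mul_X p j hp =>
      have hsum : ∑ j', eval x (pderiv j' (p * X j)) * h j'
          = (∑ j', eval x (pderiv j' p) * h j') * x j + eval x p * h j := by
        simp only [pderiv_mul, pderiv_X, map_add, map_mul, eval_X, Pi.single_apply,
          apply_ite (eval x), map_one, map_zero, mul_ite, mul_one, mul_zero,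
          ite_mul, zero_mul, add_mul]
        rw [Finset.sum_add_distrib]
        congr 1
        · rw [Finset.sum_mul]; exact Finset.sum_congr rfl fun _ _ => by ring
        · simp
      have hS : ∑ j', eval x (pderiv j' p) * h j' ∈ I :=
        Ideal.sum_mem _ fun j' _ => Ideal.mul_mem_left _ _ (hh j')
      have hD : eval (fun j => x j + h j) p - eval x p ∈ I := by
        have := Ideal.add_mem _ (Ideal.pow_le_self two_ne_zero hp) hS
        convert this using 1; ring
      have key : eval (fun j => x j + h j) (p * X j) - eval x (p * X j)
            - ∑ j', eval x (pderiv j' (p * X j)) * h j'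
          = (eval (fun j => x j + h j) p - eval x p
              - ∑ j', eval x (pderiv j' p) * h j') * x j
            + (eval (fun j => x j + h j) p - eval x p) * h j := by
        rw [hsum]; simp only [map_mul, eval_X]; ring
      rw [key]
      exact Ideal.add_mem _ (Ideal.mul_mem_right _ _ hp)
        (pow_two I ▸ Ideal.mul_mem_mul hD (hh j))

lemma eval_sub_mem {A : Type*} [CommRing A] {N : ℕ} {I : Ideal A}
    {a b : Fin N → A} (hab : ∀ j, a j - b j ∈ I) (P : MvPolynomial (Fin N) A) :
    eval a P - eval b P ∈ I := by
  have ht := taylor_mem I b (fun j => a j - b j) hab P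
  have hfun : (fun j => b j + (a j - b j)) = a := funext fun j => by ring
  rw [hfun] at ht
  have hS : ∑ j, eval b (pderiv j P) * (a j - b j) ∈ I :=
    Ideal.sum_mem _ fun j _ => Ideal.mul_mem_left _ _ (hab j)
  have := Ideal.add_mem _ (Ideal.pow_le_self two_ne_zero ht) hS
  convert this using 1; ring

theorem stmt18 {A : Type*} [CommRing A] [IsLocalRing A] (N M : ℕ)
    (F : Fin M → MvPolynomial (Fin N) A) (lam α : Fin N → A) (κ : ℕ)
    (hzero : ∀ i, MvPolynomial.eval lam (F i) = 0)
    (hminor : ∃ r : Fin N ↪ Fin M,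
      IsUnit (Matrix.det (Matrix.of fun i j : Fin N =>
        MvPolynomial.eval lam (MvPolynomial.pderiv j (F (r i))))))
    (hα : ∀ j, α j - lam j ∈ (IsLocalRing.maximalIdeal A) ^ κ) :
    ∃ ε : Fin N → A,
      (∀ j, ε j ∈ (IsLocalRing.maximalIdeal A) ^ κ) ∧
      (∀ i, MvPolynomial.eval α (F i) +
          ∑ j, MvPolynomial.eval α (MvPolynomial.pderiv j (F i)) * ε j ∈
            (IsLocalRing.maximalIdeal A) ^ (2 * κ)) ∧
      (∀ j, α j + ε j - lam j ∈ (IsLocalRing.maximalIdeal A) ^ (2 * κ)) ∧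
      ∀ ε' : Fin N → A, (∀ j, ε' j ∈ (IsLocalRing.maximalIdeal A) ^ κ) →
        (∀ i, MvPolynomial.eval α (F i) +
            ∑ j, MvPolynomial.eval α (MvPolynomial.pderiv j (F i)) * ε' j ∈
              (IsLocalRing.maximalIdeal A) ^ (2 * κ)) →
        ∀ j, ε j - ε' j ∈ (IsLocalRing.maximalIdeal A) ^ (2 * κ) := by
  set 𝔪 := IsLocalRing.maximalIdeal A
  set I : Ideal A := 𝔪 ^ κ with hIdef
  have hI2 : I ^ 2 = 𝔪 ^ (2 * κ) := by
    rw [hIdef, ← pow_mul, mul_comm]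
  refine ⟨fun j => lam j - α j, ?_, ?_, ?_, ?_⟩
  · intro j
    have := neg_mem (hα j)
    simpa using this
  · intro i
    have ht := taylor_mem I α (fun j => lam j - α j)
      (fun j => by simpa using neg_mem (hα j)) (F i)
    have hfun : (fun j => α j + (lam j - α j)) = lam := funext fun j => by ring
    rw [hfun, hzero i] at ht
    rw [← hI2]
    have := neg_mem ht
    convert this using 1; ring
  · intro j
    have : α j + (lam j - α j) - lam j = 0 := by ring
    rw [this]; exact zero_mem _
  · intro ε' hε'1 hε'2 j0
    obtain ⟨r, hdet⟩ := hminor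
    set Mm : Matrix (Fin N) (Fin N) A :=
      Matrix.of fun i j : Fin N => eval lam (pderiv j (F (r i))) with hMm
    set v : Fin N → A := fun j => (lam j - α j) - ε' j with hv
    have hvI : ∀ j, v j ∈ I := fun j =>
      Ideal.sub_mem _ (by simpa using neg_mem (hα j)) (hε'1 j)
    -- first: α-Jacobian applied to v lies in 𝔪^(2κ)
    have key1 : ∀ i, ∑ j, eval α (pderiv j (F i)) * v j ∈ 𝔪 ^ (2 * κ) := by
      intro i
      have hεsol : eval α (F i) + ∑ j, eval α (pderiv j (F i)) * (lam j - α j)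
          ∈ 𝔪 ^ (2 * κ) := by
        have ht := taylor_mem I α (fun j => lam j - α j)
          (fun j => by simpa using neg_mem (hα j)) (F i)
        have hfun : (fun j => α j + (lam j - α j)) = lam := funext fun j => by ring
        rw [hfun, hzero i] at ht
        rw [← hI2]
        have := neg_mem ht
        convert this using 1; ring
      have hsub := Ideal.sub_mem _ hεsol (hε'2 i)
      have heq : eval α (F i) + ∑ j, eval α (pderiv j (F i)) * (lam j - α j)
          - (eval α (F i) + ∑ j, eval α (pderiv j (F i)) * ε' j)
          = ∑ j, eval α (pderiv j (F i)) * v j := by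
        rw [show (eval α (F i) + ∑ j, eval α (pderiv j (F i)) * (lam j - α j)
          - (eval α (F i) + ∑ j, eval α (pderiv j (F i)) * ε' j))
          = ∑ j, eval α (pderiv j (F i)) * (lam j - α j)
            - ∑ j, eval α (pderiv j (F i)) * ε' j from by ring,
          ← Finset.sum_sub_distrib]
        exact Finset.sum_congr rfl fun j _ => by simp only [hv]; ring
      rwa [heq] at hsub
    -- second: λ-Jacobian applied to v lies in 𝔪^(2κ)
    have key2 : ∀ i, ∑ j, eval lam (pderiv j (F i)) * v j ∈ 𝔪 ^ (2 * κ) := by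
      intro i
      have hdiff : ∑ j, (eval lam (pderiv j (F i)) - eval α (pderiv j (F i))) * v j
          ∈ 𝔪 ^ (2 * κ) := by
        rw [← hI2, pow_two]
        refine Ideal.sum_mem _ fun j _ => Ideal.mul_mem_mul ?_ (hvI j)
        exact eval_sub_mem (fun k => by simpa using neg_mem (hα k)) _
      have := Ideal.add_mem _ hdiff (key1 i)
      convert this using 1
      rw [← Finset.sum_add_distrib]
      exact Finset.sum_congr rfl fun j _ => by ring
    -- matrix step
    have hMv : ∀ i, Mm.mulVec v i ∈ 𝔪 ^ (2 * κ) := by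
      intro i
      simpa [Matrix.mulVec, dotProduct, Mm] using key2 (r i)
    have hadj : Mm.det * v j0 = ∑ i, Mm.adjugate j0 i * Mm.mulVec v i := by
      have h1 : (Mm.adjugate).mulVec (Mm.mulVec v) = Mm.det • v := by
        rw [Matrix.mulVec_mulVec, Matrix.adjugate_mul]
        ext k
        simp [Matrix.smul_mulVec, Matrix.mulVec, dotProduct, Matrix.one_apply, ite_mul, zero_mul, Finset.sum_ite_eq]
      have := congrFun h1 j0
      simp only [Pi.smul_apply, smul_eq_mul] at this
      rw [← this]
      simp [Matrix.mulVec, dotProduct]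
    have hmem : Mm.det * v j0 ∈ 𝔪 ^ (2 * κ) := by
      rw [hadj]
      exact Ideal.sum_mem _ fun i _ => Ideal.mul_mem_left _ _ (hMv i)
    have hfinal : v j0 ∈ 𝔪 ^ (2 * κ) := by
      have h2 := Ideal.mul_mem_left _ (↑hdet.unit⁻¹) hmem
      rwa [← mul_assoc, IsUnit.val_inv_mul, one_mul] at h2
    have : (lam j0 - α j0) - ε' j0 = v j0 := rfl
    rw [this]
    exact hfinal
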